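/- Let ε ∈ ℝ^M be a random vector and f: ℝ^D × ℝ^M → ℝ satisfy the additivity of the median (Assumption 3) and the regularity assumption (Assumption 4). Let ε₁, ε₂ be i.i.d. copies of ε and define ε^f(x₁,x₂) := f(x₁;ε₁) − f(x₂;ε₂). Then for any x₁, x₂ ∈ ℝ^D with m_f(x₁) ≠ m_f(x₂), E[sign(ε^f(x₁,x₂))] · sign(m_f(x₁) − m_f(x₂)) > 0. -/

import Mathlib

open MeasureTheory ProbabilityTheory Filter

/-- The center of the median of a real random variable `Y` under measure `μ`:
`(inf {t : F(t) > 1/2} + sup {t : F(t) < 1/2}) / 2` where `F` is the CDF of `Y`. -/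
noncomputable def medCenter {Ω : Type*} [MeasurableSpace Ω] (μ : Measure Ω) (Y : Ω → ℝ) : ℝ :=
  (sInf {t : ℝ | 1 / 2 < (μ {ω | Y ω ≤ t}).toReal} +
    sSup {t : ℝ | (μ {ω | Y ω ≤ t}).toReal < 1 / 2}) / 2

/-- Under additivity of the median (Assumption 3) and the regularity assumption
(Assumption 4), the expectation of the sign of `ε^f(x₁,x₂) = f(x₁;ε₁) - f(x₂;ε₂)` has
strictly the same sign as `m_f(x₁) - m_f(x₂)` whenever the latter is nonzero
(second part of Proposition 5 of the paper). -/
lemma aux_right {F : ℝ → ℝ} {d m : ℝ} (hd : HasDerivAt F d m) (hdp : 0 < d)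
    {η : ℝ} (hη : 0 < η) : ∃ δ, 0 < δ ∧ δ < η ∧ F m < F (m + δ) := by
  have h := hasDerivAt_iff_tendsto_slope.1 hd
  have h1 : ∀ᶠ t in nhdsWithin m (Set.Ioi m), 0 < slope F m t :=
    (h.eventually (eventually_gt_nhds hdp)).filter_mono
      (nhdsWithin_mono m (fun t ht => ne_of_gt ht))
  have h2 : Set.Ioo m (m + η) ∈ nhdsWithin m (Set.Ioi m) :=
    Ioo_mem_nhdsGT_of_mem ⟨le_refl m, by linarith⟩
  obtain ⟨t, ht1, ht2⟩ := (h1.and (eventually_of_mem h2 fun t ht => ht)).exists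
  refine ⟨t - m, by linarith [ht2.1], by linarith [ht2.2], ?_⟩
  rw [slope_def_field] at ht1
  have htm : 0 < t - m := by linarith [ht2.1]
  have h3 : 0 < F t - F m := by
    have := mul_pos ht1 htm
    rwa [div_mul_cancel₀ _ (ne_of_gt htm)] at this
  have : F m < F t := by linarith
  simpa using this

lemma aux_left {F : ℝ → ℝ} {d m : ℝ} (hd : HasDerivAt F d m) (hdp : 0 < d)
    {η : ℝ} (hη : 0 < η) : ∃ δ, 0 < δ ∧ δ < η ∧ F (m - δ) < F m := by
  have h := hasDerivAt_iff_tendsto_slope.1 hd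
  have h1 : ∀ᶠ t in nhdsWithin m (Set.Iio m), 0 < slope F m t :=
    (h.eventually (eventually_gt_nhds hdp)).filter_mono
      (nhdsWithin_mono m (fun t ht => ne_of_lt ht))
  have h2 : Set.Ioo (m - η) m ∈ nhdsWithin m (Set.Iio m) :=
    Ioo_mem_nhdsLT_of_mem ⟨by linarith, le_refl m⟩
  obtain ⟨t, ht1, ht2⟩ := (h1.and (eventually_of_mem h2 fun t ht => ht)).exists
  refine ⟨m - t, by linarith [ht2.2], by linarith [ht2.1], ?_⟩
  rw [slope_def_field] at ht1
  have htm : t - m < 0 := by linarith [ht2.2]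
  have h3 : F t - F m < 0 := by
    by_contra hc
    push_neg at hc
    have : (F t - F m) / (t - m) ≤ 0 := div_nonpos_of_nonneg_of_nonpos hc (le_of_lt htm)
    linarith
  have : F t < F m := by linarith
  simpa using this

/-- Key positivity lemma: the difference of two independent random variables whose CDFs have
positive derivative at `m₁` resp. `m₂` puts mass just above `m₁ - m₂`. -/
lemma key_lemma {Ω : Type*} [MeasurableSpace Ω] (μ : Measure Ω) [IsProbabilityMeasure μ]
    (X Y : Ω → ℝ) (hX : Measurable X) (hY : Measurable Y) (hindep : IndepFun X Y μ)
    (m₁ m₂ d₁ d₂ : ℝ) (hd₁p : 0 < d₁) (hd₂p : 0 < d₂)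
    (hD₁ : HasDerivAt (fun t => (μ {ω | X ω ≤ t}).toReal) d₁ m₁)
    (hD₂ : HasDerivAt (fun t => (μ {ω | Y ω ≤ t}).toReal) d₂ m₂)
    {η : ℝ} (hη : 0 < η) :
    ∃ δ, 0 < δ ∧ δ < η ∧
      (μ {ω | X ω - Y ω ≤ m₁ - m₂}).toReal <
        (μ {ω | X ω - Y ω ≤ m₁ - m₂ + 2 * δ}).toReal := by
  obtain ⟨δx, hδx0, hδxη, hFx⟩ := aux_right hD₁ hd₁p hη
  obtain ⟨δy, hδy0, hδyη, hFy⟩ := aux_left hD₂ hd₂p hη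
  set δ := max δx δy with hδdef
  have hδ0 : 0 < δ := lt_of_lt_of_le hδx0 (le_max_left _ _)
  have hδη : δ < η := max_lt hδxη hδyη
  have hδx : δx ≤ δ := le_max_left _ _
  have hδy : δy ≤ δ := le_max_right _ _
  have hmonoX : (μ {ω | X ω ≤ m₁}).toReal < (μ {ω | X ω ≤ m₁ + δ}).toReal :=
    lt_of_lt_of_le hFx (ENNReal.toReal_mono (measure_ne_top μ _)
      (measure_mono (fun ω (h : X ω ≤ m₁ + δx) => show X ω ≤ m₁ + δ by linarith)))
  have hmonoY : (μ {ω | Y ω ≤ m₂ - δ}).toReal < (μ {ω | Y ω ≤ m₂}).toReal :=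
    lt_of_le_of_lt (ENNReal.toReal_mono (measure_ne_top μ _)
      (measure_mono (fun ω (h : Y ω ≤ m₂ - δ) => show Y ω ≤ m₂ - δy by linarith))) hFy
  -- mass of X in (m₁, m₁+δ]
  have hXpos : μ (X ⁻¹' Set.Ioc m₁ (m₁ + δ)) ≠ 0 := by
    intro h0
    have hsub : {ω | X ω ≤ m₁ + δ} ⊆ {ω | X ω ≤ m₁} ∪ X ⁻¹' Set.Ioc m₁ (m₁ + δ) := by
      intro ω hω
      rcases le_or_gt (X ω) m₁ with h | h
      · exact Or.inl h
      · exact Or.inr ⟨h, hω⟩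
    have : μ {ω | X ω ≤ m₁ + δ} ≤ μ {ω | X ω ≤ m₁} := by
      calc μ {ω | X ω ≤ m₁ + δ} ≤ μ ({ω | X ω ≤ m₁} ∪ X ⁻¹' Set.Ioc m₁ (m₁ + δ)) :=
            measure_mono hsub
        _ ≤ μ {ω | X ω ≤ m₁} + μ (X ⁻¹' Set.Ioc m₁ (m₁ + δ)) := measure_union_le _ _
        _ = μ {ω | X ω ≤ m₁} := by rw [h0, add_zero]
    exact absurd (ENNReal.toReal_mono (measure_ne_top μ _) this) (not_le.2 hmonoX)
  have hYpos : μ (Y ⁻¹' Set.Ioc (m₂ - δ) m₂) ≠ 0 := by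
    intro h0
    have hsub : {ω | Y ω ≤ m₂} ⊆ {ω | Y ω ≤ m₂ - δ} ∪ Y ⁻¹' Set.Ioc (m₂ - δ) m₂ := by
      intro ω hω
      rcases le_or_gt (Y ω) (m₂ - δ) with h | h
      · exact Or.inl h
      · exact Or.inr ⟨h, hω⟩
    have : μ {ω | Y ω ≤ m₂} ≤ μ {ω | Y ω ≤ m₂ - δ} := by
      calc μ {ω | Y ω ≤ m₂} ≤ μ ({ω | Y ω ≤ m₂ - δ} ∪ Y ⁻¹' Set.Ioc (m₂ - δ) m₂) :=
            measure_mono hsub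
        _ ≤ μ {ω | Y ω ≤ m₂ - δ} + μ (Y ⁻¹' Set.Ioc (m₂ - δ) m₂) := measure_union_le _ _
        _ = μ {ω | Y ω ≤ m₂ - δ} := by rw [h0, add_zero]
    exact absurd (ENNReal.toReal_mono (measure_ne_top μ _) this) (not_le.2 hmonoY)
  have hmul := hindep.measure_inter_preimage_eq_mul (s := Set.Ioc m₁ (m₁ + δ))
    (t := Set.Ioc (m₂ - δ) m₂) measurableSet_Ioc measurableSet_Ioc
  have hinterpos : 0 < μ (X ⁻¹' Set.Ioc m₁ (m₁ + δ) ∩ Y ⁻¹' Set.Ioc (m₂ - δ) m₂) := by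
    rw [hmul]
    exact ENNReal.mul_pos hXpos hYpos
  set m := m₁ - m₂ with hm
  have hsubZ : X ⁻¹' Set.Ioc m₁ (m₁ + δ) ∩ Y ⁻¹' Set.Ioc (m₂ - δ) m₂ ⊆
      {ω | m < X ω - Y ω ∧ X ω - Y ω ≤ m + 2 * δ} := by
    rintro ω ⟨⟨h1, h2⟩, ⟨h3, h4⟩⟩
    refine ⟨?_, ?_⟩
    · show m < X ω - Y ω; rw [hm]; linarith
    · show X ω - Y ω ≤ m + 2 * δ; rw [hm]; linarith
  have hZpos : 0 < μ {ω | m < X ω - Y ω ∧ X ω - Y ω ≤ m + 2 * δ} :=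
    lt_of_lt_of_le hinterpos (measure_mono hsubZ)
  refine ⟨δ, hδ0, hδη, ?_⟩
  have hdisj : Disjoint {ω | X ω - Y ω ≤ m} {ω | m < X ω - Y ω ∧ X ω - Y ω ≤ m + 2 * δ} := by
    rw [Set.disjoint_left]
    rintro ω h1 ⟨h2, _⟩
    exact absurd h1 (not_le.2 h2)
  have hmeas2 : MeasurableSet {ω | m < X ω - Y ω ∧ X ω - Y ω ≤ m + 2 * δ} := by
    have : {ω | m < X ω - Y ω ∧ X ω - Y ω ≤ m + 2 * δ} =
        (fun ω => X ω - Y ω) ⁻¹' Set.Ioc m (m + 2 * δ) := rfl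
    rw [this]
    exact (hX.sub hY) measurableSet_Ioc
  have hunion : {ω | X ω - Y ω ≤ m} ∪ {ω | m < X ω - Y ω ∧ X ω - Y ω ≤ m + 2 * δ} ⊆
      {ω | X ω - Y ω ≤ m + 2 * δ} := by
    rintro ω (h | ⟨_, h⟩)
    · simp only [Set.mem_setOf_eq] at h ⊢; linarith
    · exact h
  have hlt : μ {ω | X ω - Y ω ≤ m} < μ {ω | X ω - Y ω ≤ m + 2 * δ} := by
    calc μ {ω | X ω - Y ω ≤ m} <
        μ {ω | X ω - Y ω ≤ m} + μ {ω | m < X ω - Y ω ∧ X ω - Y ω ≤ m + 2 * δ} :=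
          ENNReal.lt_add_right (measure_ne_top μ _) (ne_of_gt hZpos)
      _ = μ ({ω | X ω - Y ω ≤ m} ∪ {ω | m < X ω - Y ω ∧ X ω - Y ω ≤ m + 2 * δ}) :=
          (measure_union hdisj hmeas2).symm
      _ ≤ μ {ω | X ω - Y ω ≤ m + 2 * δ} := measure_mono hunion
  exact (ENNReal.toReal_lt_toReal (measure_ne_top μ _) (measure_ne_top μ _)).2 hlt

/-- Core sign lemma for a single real random variable. -/
lemma main_core {Ω : Type*} [MeasurableSpace Ω] (μ : Measure Ω) [IsProbabilityMeasure μ]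
    (Z : Ω → ℝ) (hZ : Measurable Z) (m : ℝ) (hmed : medCenter μ Z = m)
    (hkey : ∀ η : ℝ, 0 < η → ∃ δ, 0 < δ ∧ δ < η ∧
      (μ {ω | Z ω ≤ m}).toReal < (μ {ω | Z ω ≤ m + 2 * δ}).toReal)
    (hm0 : m ≠ 0) :
    0 < (∫ ω, Real.sign (Z ω) ∂μ) * Real.sign m := by
  set G : ℝ → ℝ := fun t => (μ {ω | Z ω ≤ t}).toReal with hGdef
  have Gmono : Monotone G := fun s t hst =>
    ENNReal.toReal_mono (measure_ne_top μ _) (measure_mono (fun ω h => le_trans h hst))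
  have hmedEq : sInf {t : ℝ | 1 / 2 < G t} + sSup {t : ℝ | G t < 1 / 2} = 2 * m := by
    have h := hmed
    unfold medCenter at h
    rw [hGdef]
    linarith
  -- integral computation
  have hmZ0 : MeasurableSet {ω | 0 < Z ω} := measurableSet_lt measurable_const hZ
  have hmZn : MeasurableSet {ω | Z ω < 0} := measurableSet_lt hZ measurable_const
  have hmZle : MeasurableSet {ω | Z ω ≤ (0:ℝ)} := measurableSet_le hZ measurable_const
  have hsign : ∀ ω, Real.sign (Z ω) =
      Set.indicator {ω | 0 < Z ω} (fun _ => (1:ℝ)) ω -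
        Set.indicator {ω | Z ω < 0} (fun _ => (1:ℝ)) ω := by
    intro ω
    rcases lt_trichotomy (Z ω) 0 with h | h | h
    · rw [Real.sign_of_neg h]
      simp [Set.indicator_apply, h, asymm h]
    · simp [Real.sign, Set.indicator_apply, h]
    · rw [Real.sign_of_pos h]
      simp [Set.indicator_apply, h, asymm h]
  have hint1 : Integrable (Set.indicator {ω | 0 < Z ω} (fun _ => (1:ℝ))) μ :=
    (integrable_const (1:ℝ)).indicator hmZ0
  have hint2 : Integrable (Set.indicator {ω | Z ω < 0} (fun _ => (1:ℝ))) μ :=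
    (integrable_const (1:ℝ)).indicator hmZn
  have hI : (∫ ω, Real.sign (Z ω) ∂μ) =
      (μ {ω | 0 < Z ω}).toReal - (μ {ω | Z ω < 0}).toReal := by
    calc (∫ ω, Real.sign (Z ω) ∂μ)
        = ∫ ω, (Set.indicator {ω | 0 < Z ω} (fun _ => (1:ℝ)) ω -
            Set.indicator {ω | Z ω < 0} (fun _ => (1:ℝ)) ω) ∂μ := by
          exact integral_congr_ae (Filter.Eventually.of_forall hsign)
      _ = (∫ ω, Set.indicator {ω | 0 < Z ω} (fun _ => (1:ℝ)) ω ∂μ) -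
            ∫ ω, Set.indicator {ω | Z ω < 0} (fun _ => (1:ℝ)) ω ∂μ :=
          integral_sub hint1 hint2
      _ = (μ {ω | 0 < Z ω}).toReal - (μ {ω | Z ω < 0}).toReal := by
          rw [integral_indicator_const _ hmZ0, integral_indicator_const _ hmZn]
          simp
          rfl
  set p := (μ {ω | 0 < Z ω}).toReal with hp
  set q := (μ {ω | Z ω < 0}).toReal with hq
  set r := (μ {ω | Z ω ≤ (0:ℝ)}).toReal with hr
  have hpr : r + p = 1 := by
    have hcompl : {ω | Z ω ≤ (0:ℝ)}ᶜ = {ω | 0 < Z ω} := by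
      ext ω; simp [not_le]
    have := measure_add_measure_compl (μ := μ) hmZle
    rw [hcompl] at this
    have h2 : (μ {ω | Z ω ≤ (0:ℝ)} + μ {ω | 0 < Z ω}).toReal = (μ (Set.univ : Set Ω)).toReal := by
      rw [this]
    rw [ENNReal.toReal_add (measure_ne_top μ _) (measure_ne_top μ _)] at h2
    simpa using h2
  have hqr : q ≤ r :=
    ENNReal.toReal_mono (measure_ne_top μ _) (measure_mono (fun ω (h : Z ω < 0) => show Z ω ≤ 0 from le_of_lt h))
  have hGr : G 0 = r := rfl
  rcases lt_or_gt_of_ne hm0 with hm | hm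
  · -- m < 0 : show q > 1/2
    have claim : ∃ t, t < 0 ∧ 1 / 2 < G t := by
      by_contra hc
      push_neg at hc
      obtain ⟨δ, hδ0, hδη, hkeyδ⟩ := hkey (-m / 2) (by linarith)
      have ht0 : m + 2 * δ < 0 := by linarith
      have hGm : G m ≤ 1 / 2 := hc m hm
      rcases eq_or_lt_of_le hGm with heq | hlt
      · exact absurd (hc _ ht0) (not_le.2 (by rw [← heq]; exact hkeyδ))
      · by_cases hbdd : BddAbove {t : ℝ | G t < 1 / 2}
        · have h1 : m ≤ sSup {t : ℝ | G t < 1 / 2} := le_csSup hbdd hlt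
          have h2 : 0 ≤ sInf {t : ℝ | 1 / 2 < G t} := by
            apply Real.sInf_nonneg
            intro a ha
            by_contra h0
            push_neg at h0
            exact absurd (hc a h0) (not_le.2 ha)
          linarith
        · have hall : ∀ s : ℝ, G s < 1 / 2 := by
            intro s
            obtain ⟨b, hbB, hbs⟩ := not_bddAbove_iff.1 hbdd s
            exact lt_of_le_of_lt (Gmono (le_of_lt hbs)) hbB
          have hAe : {t : ℝ | 1 / 2 < G t} = ∅ :=
            Set.eq_empty_iff_forall_notMem.2 (fun a ha => absurd (hall a) (not_lt.2 (le_of_lt ha)))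
          have h1 : sInf {t : ℝ | 1 / 2 < G t} = 0 := by rw [hAe]; exact Real.sInf_empty
          have h2 : sSup {t : ℝ | G t < 1 / 2} = 0 := Real.sSup_of_not_bddAbove hbdd
          linarith
    obtain ⟨t, ht0, htG⟩ := claim
    have hq2 : 1 / 2 < q :=
      lt_of_lt_of_le htG (ENNReal.toReal_mono (measure_ne_top μ _)
        (measure_mono (fun ω h => lt_of_le_of_lt h ht0)))
    have hpq : p ≤ 1 - q := by
      have : q ≤ r := hqr
      linarith
    rw [hI, Real.sign_of_neg hm]
    nlinarith
  · -- 0 < m : show r < 1/2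
    have claim : r < 1 / 2 := by
      by_contra hc
      push_neg at hc
      have hGm : 1 / 2 ≤ G m := le_trans hc (Gmono (le_of_lt hm))
      obtain ⟨δ, hδ0, hδη, hkeyδ⟩ := hkey (m / 2) (by linarith)
      have htA : (m + 2 * δ) ∈ {t : ℝ | 1 / 2 < G t} := lt_of_le_of_lt hGm hkeyδ
      have ht2m : m + 2 * δ < 2 * m := by linarith
      by_cases hbdd : BddBelow {t : ℝ | 1 / 2 < G t}
      · have h1 : sInf {t : ℝ | 1 / 2 < G t} ≤ m + 2 * δ := csInf_le hbdd htA
        have h2 : sSup {t : ℝ | G t < 1 / 2} ≤ 0 := by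
          apply Real.sSup_le _ le_rfl
          intro b hb
          by_contra h0
          push_neg at h0
          have : r ≤ G b := Gmono (le_of_lt h0)
          simp only [Set.mem_setOf_eq] at hb
          linarith
        linarith
      · have hall : ∀ s : ℝ, 1 / 2 < G s := by
          intro s
          obtain ⟨a, haA, has⟩ := not_bddBelow_iff.1 hbdd s
          exact lt_of_lt_of_le haA (Gmono (le_of_lt has))
        have hBe : {t : ℝ | G t < 1 / 2} = ∅ :=
          Set.eq_empty_iff_forall_notMem.2 (fun b hb => absurd (hall b) (not_lt.2 (le_of_lt hb)))
        have h1 : sSup {t : ℝ | G t < 1 / 2} = 0 := by rw [hBe]; exact Real.sSup_empty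
        have h2 : sInf {t : ℝ | 1 / 2 < G t} = 0 := Real.sInf_of_not_bddBelow hbdd
        linarith
    have hp2 : 1 / 2 < p := by linarith
    have hq2 : q < 1 / 2 := lt_of_le_of_lt hqr claim
    rw [hI, Real.sign_of_pos hm]
    nlinarith

theorem statement12 {Ω : Type*} [MeasurableSpace Ω] (μ : Measure Ω) [IsProbabilityMeasure μ]
    (D M : ℕ) (f : (Fin D → ℝ) → (Fin M → ℝ) → ℝ) (hf : ∀ x, Measurable (f x))
    (ε₁ ε₂ : Ω → Fin M → ℝ) (hε₁ : Measurable ε₁) (hε₂ : Measurable ε₂)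
    (hid : μ.map ε₁ = μ.map ε₂) (hindep : IndepFun ε₁ ε₂ μ)
    (hmed_add : ∀ x y : Fin D → ℝ,
      medCenter μ (fun ω => f x (ε₁ ω) - f y (ε₂ ω)) =
        medCenter μ (fun ω => f x (ε₁ ω)) - medCenter μ (fun ω => f y (ε₁ ω)))
    (hreg : ∀ x : Fin D → ℝ, ∃ d : ℝ, 0 < d ∧
      HasDerivAt (fun t => (μ {ω | f x (ε₁ ω) ≤ t}).toReal) d
        (medCenter μ (fun ω => f x (ε₁ ω)))) :
    ∀ x₁ x₂ : Fin D → ℝ,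
      medCenter μ (fun ω => f x₁ (ε₁ ω)) ≠ medCenter μ (fun ω => f x₂ (ε₁ ω)) →
      0 < (∫ ω, Real.sign (f x₁ (ε₁ ω) - f x₂ (ε₂ ω)) ∂μ) *
        Real.sign (medCenter μ (fun ω => f x₁ (ε₁ ω)) -
          medCenter μ (fun ω => f x₂ (ε₁ ω))) := by
  intro x₁ x₂ hne
  have hX : Measurable fun ω => f x₁ (ε₁ ω) := (hf x₁).comp hε₁
  have hY : Measurable fun ω => f x₂ (ε₂ ω) := (hf x₂).comp hε₂
  have hZ : Measurable fun ω => f x₁ (ε₁ ω) - f x₂ (ε₂ ω) := hX.sub hY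
  have hcdf : ∀ t : ℝ, μ {ω | f x₂ (ε₂ ω) ≤ t} = μ {ω | f x₂ (ε₁ ω) ≤ t} := by
    intro t
    have hs : MeasurableSet {y : Fin M → ℝ | f x₂ y ≤ t} := (hf x₂) measurableSet_Iic
    have h1 : μ {ω | f x₂ (ε₂ ω) ≤ t} = (μ.map ε₂) {y | f x₂ y ≤ t} :=
      (Measure.map_apply hε₂ hs).symm
    have h2 : μ {ω | f x₂ (ε₁ ω) ≤ t} = (μ.map ε₁) {y | f x₂ y ≤ t} :=
      (Measure.map_apply hε₁ hs).symm
    rw [h1, h2, hid]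
  obtain ⟨d₁, hd₁p, hD₁⟩ := hreg x₁
  obtain ⟨d₂, hd₂p, hD₂⟩ := hreg x₂
  have hD₂' : HasDerivAt (fun t => (μ {ω | f x₂ (ε₂ ω) ≤ t}).toReal)
      d₂ (medCenter μ (fun ω => f x₂ (ε₁ ω))) := by
    have heq : (fun t => (μ {ω | f x₂ (ε₂ ω) ≤ t}).toReal)
        = fun t => (μ {ω | f x₂ (ε₁ ω) ≤ t}).toReal := funext fun t => by rw [hcdf t]
    rw [heq]; exact hD₂
  have hindep' : IndepFun (fun ω => f x₁ (ε₁ ω)) (fun ω => f x₂ (ε₂ ω)) μ :=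
    hindep.comp (hf x₁) (hf x₂)
  have hm0 : medCenter μ (fun ω => f x₁ (ε₁ ω)) - medCenter μ (fun ω => f x₂ (ε₁ ω)) ≠ 0 :=
    sub_ne_zero.2 hne
  exact main_core μ _ hZ _ (hmed_add x₁ x₂)
    (fun η hη => key_lemma μ _ _ hX hY hindep' _ _ d₁ d₂ hd₁p hd₂p hD₁ hD₂' hη) hm0
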